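/- Assume the Setup. Then for every k ≥ 1 and every cube J ∈ B_{l_k}^d with J ⊆ X_k, one has μ(J) ≤ 2 C_0^d · l_k^{(dn−α)/(n−1) − η_k}, where η_k = (n+1)ε_k/(2(n−1)). -/
import Mathlib


open Filter Set

noncomputable section

/-- A dyadic length: a real number of the form `2 ^ (-k)` for a natural number `k`. -/
def IsDyadicLength (l : ℝ) : Prop := ∃ k : ℕ, l = (2 : ℝ) ^ (-(k : ℤ))

/-- The half-open dyadic cube of sidelength `l` with corner `l • m`. -/
def dyadicCube {ι : Type*} (l : ℝ) (m : ι → ℤ) : Set (ι → ℝ) :=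
  {x | ∀ i, l * (m i : ℝ) ≤ x i ∧ x i < l * ((m i : ℝ) + 1)}

/-- The (indices of the) cubes of `B_l` that intersect `E`. -/
def cubesMeeting {ι : Type*} (l : ℝ) (E : Set (ι → ℝ)) : Set (ι → ℤ) :=
  {m | (dyadicCube l m ∩ E).Nonempty}

/-- `#B_l(E)`, the number of cubes of sidelength `l` meeting `E`. -/
def cubeCount {ι : Type*} (l : ℝ) (E : Set (ι → ℝ)) : ℕ :=
  (cubesMeeting l E).ncard

/-- `E` is a union of cubes of `B_l`. -/
def IsCubeUnion {ι : Type*} (l : ℝ) (E : Set (ι → ℝ)) : Prop :=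
  ∃ S : Set (ι → ℤ), E = ⋃ m ∈ S, dyadicCube l m

/-- Lower Minkowski dimension, computed along dyadic scales. -/
def lowerMinkDim {ι : Type*} (Z : Set (ι → ℝ)) : ℝ :=
  Filter.atTop.liminf fun k : ℕ =>
    Real.log (cubeCount ((2 : ℝ) ^ (-(k : ℤ))) Z) / (k * Real.log 2)

/-- The unit cube `[0,1)^d`. -/
def unitCube (d : ℕ) : Set (Fin d → ℝ) := {x | ∀ i, x i ∈ Set.Ico (0 : ℝ) 1}

/-- `X^n`, viewed inside `ℝ^{dn} = (Fin n × Fin d → ℝ)`. -/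
def nthPower {d n : ℕ} (X : Set (Fin d → ℝ)) : Set (Fin n × Fin d → ℝ) :=
  {y | ∀ j, (fun i => y (j, i)) ∈ X}

/-- The point `(x_1, …, x_n) ∈ ℝ^{dn}` built from `x_1, …, x_n ∈ ℝ^d`. -/
def tuple {d n : ℕ} (x : Fin n → Fin d → ℝ) : Fin n × Fin d → ℝ := fun p => x p.1 p.2

/-- The `j`-th factor of a cube index in `B_l^{dn}`. -/
def cubeRow {d n : ℕ} (M : Fin n × Fin d → ℤ) (j : Fin n) : Fin d → ℤ := fun i => M (j, i)

/-- A cube of `B_l^{dn}` is strongly non-diagonal if its `n` factors are pairwise distinct. -/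
def StronglyNonDiagonal {d n : ℕ} (M : Fin n × Fin d → ℤ) : Prop :=
  Function.Injective (cubeRow M)


lemma dyadic_pos {l : ℝ} (h : IsDyadicLength l) : 0 < l := by
  obtain ⟨k, rfl⟩ := h
  positivity

lemma dyadicCube_nonempty {ι : Type*} {l : ℝ} (hl : 0 < l) (m : ι → ℤ) :
    (dyadicCube l m).Nonempty := by
  refine ⟨fun i => l * (m i : ℝ), fun i => ⟨le_refl _, ?_⟩⟩
  show l * (m i : ℝ) < l * ((m i : ℝ) + 1)
  nlinarith [hl]

lemma nested_cube {ι : Type*} {l L : ℝ} {T : ℤ} (hl : 0 < l) (hT : 0 < T)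
    (hL : L = (T : ℝ) * l) (J : ι → ℤ) :
    dyadicCube l J ⊆ dyadicCube L (fun i => J i / T) := by
  intro x hx i
  obtain ⟨h1, h2⟩ := hx i
  have hdiv := Int.mul_ediv_add_emod (J i) T
  have hm0 := Int.emod_nonneg (J i) hT.ne'
  have hm1 := Int.emod_lt_of_pos (J i) hT
  have hq1 : T * (J i / T) ≤ J i := by omega
  have hq2 : (J i : ℤ) + 1 ≤ T * (J i / T) + T := by omega
  have c1 : (T : ℝ) * ((J i / T : ℤ) : ℝ) ≤ (J i : ℝ) := by exact_mod_cast hq1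
  have c2 : ((J i : ℝ)) + 1 ≤ (T : ℝ) * ((J i / T : ℤ) : ℝ) + (T : ℝ) := by
    exact_mod_cast hq2
  constructor
  · rw [hL]
    nlinarith [mul_le_mul_of_nonneg_left c1 hl.le, h1]
  · rw [hL]
    nlinarith [mul_le_mul_of_nonneg_left c2 hl.le, h2]

/-- **Lemma 4.1.** Mass bound at the scales `l_k`. -/
theorem mass_at_scale_lk
    (d n : ℕ) (hd : 1 ≤ d) (hn : 2 ≤ n)
    (α : ℝ) (hαd : (d : ℝ) ≤ α) (hαdn : α < (d : ℝ) * n)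
    (ε : ℕ → ℝ) (hεpos : ∀ k, 0 < ε k) (hεlim : Filter.Tendsto ε Filter.atTop (nhds 0))
    (C₀ : ℝ) (hC₀ : 0 < C₀)
    (l : ℕ → ℝ) (hldyadic : ∀ k, IsDyadicLength (l k)) (hl0 : l 0 = 1)
    (hlanti : StrictAnti l) (hllim : Filter.Tendsto l Filter.atTop (nhds 0))
    (hlquad : ∀ k, 1 ≤ k → (l k) ^ (ε k) ≤ (l (k - 1)) ^ (2 * (d : ℝ)))
    (r : ℕ → ℝ) (hrdyadic : ∀ k, 1 ≤ k → IsDyadicLength (r k))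
    (hrlow : ∀ k, 1 ≤ k → l k ≤ r k) (hrhigh : ∀ k, 1 ≤ k → r k ≤ l (k - 1))
    (hrsize : ∀ k, 1 ≤ k →
      r k ≤ C₀ * (l k) ^ (((d : ℝ) * n - α - ε k) / ((d : ℝ) * ((n : ℝ) - 1))))
    (X : ℕ → Set (Fin d → ℝ)) (hX0 : X 0 = unitCube d)
    (hXmono : ∀ k, X (k + 1) ⊆ X k)
    (hXcube : ∀ k, (X k).Nonempty ∧ IsCubeUnion (l k) (X k))
    (hXlarge : ∀ k, 1 ≤ k → ∀ m ∈ cubesMeeting (l (k - 1)) (X (k - 1)),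
      (1 / 2) * (l (k - 1) / r k) ^ d ≤
        (cubeCount (l k) (X k ∩ dyadicCube (l (k - 1)) m) : ℝ))
    (hXsep : ∀ k, 1 ≤ k → ∀ m' : Fin d → ℤ, ∀ m₁ ∈ cubesMeeting (l k) (X k),
      ∀ m₂ ∈ cubesMeeting (l k) (X k), dyadicCube (l k) m₁ ⊆ dyadicCube (r k) m' →
        dyadicCube (l k) m₂ ⊆ dyadicCube (r k) m' → m₁ = m₂)
    (μ : MeasureTheory.Measure (Fin d → ℝ))
    (hμ1 : μ (unitCube d) = 1) (hμ2 : μ (unitCube d)ᶜ = 0)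
    (hμrec : ∀ k, 1 ≤ k → ∀ J : Fin d → ℤ, dyadicCube (l k) J ⊆ unitCube d →
      ∀ I : Fin d → ℤ, dyadicCube (l k) J ⊆ dyadicCube (l (k - 1)) I →
        (dyadicCube (l k) J ⊆ X k →
          μ (dyadicCube (l k) J) = μ (dyadicCube (l (k - 1)) I) /
            (cubeCount (l k) (X k ∩ dyadicCube (l (k - 1)) I) : ENNReal)) ∧
        (¬ dyadicCube (l k) J ⊆ X k → μ (dyadicCube (l k) J) = 0))
    :
    ∀ k, 1 ≤ k → ∀ J : Fin d → ℤ, dyadicCube (l k) J ⊆ X k →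
      μ (dyadicCube (l k) J) ≤ ENNReal.ofReal (2 * C₀ ^ d *
        (l k) ^ (((d : ℝ) * n - α) / ((n : ℝ) - 1) -
          ((n : ℝ) + 1) * ε k / (2 * ((n : ℝ) - 1)))) := by

  intro k hk J hJX
  -- positivity of the scales
  have hlkpos : 0 < l k := dyadic_pos (hldyadic k)
  have hLpos : 0 < l (k - 1) := dyadic_pos (hldyadic (k - 1))
  have hRpos : 0 < r k := dyadic_pos (hrdyadic k hk)
  have hklt : k - 1 < k := Nat.sub_lt (by omega) one_pos
  have hlt : l k < l (k - 1) := hlanti hklt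
  -- the containing cube at scale l (k-1)
  obtain ⟨a, ha⟩ := hldyadic k
  obtain ⟨b, hb⟩ := hldyadic (k - 1)
  have hba : b < a := by
    have h2 : (2 : ℝ) ^ (-(a : ℤ)) < (2 : ℝ) ^ (-(b : ℤ)) := by
      rw [← ha, ← hb]; exact hlt
    have := (zpow_lt_zpow_iff_right₀ (by norm_num : (1 : ℝ) < 2)).mp h2
    omega
  set T : ℤ := 2 ^ (a - b) with hTdef
  have hTpos : 0 < T := by positivity
  have hLT : l (k - 1) = (T : ℝ) * l k := by
    rw [ha, hb, hTdef]
    push_cast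
    rw [← zpow_natCast (2 : ℝ) (a - b), ← zpow_add₀ (by norm_num : (2:ℝ) ≠ 0)]
    congr 1
    omega
  set I : Fin d → ℤ := fun i => J i / T with hIdef
  have hJI : dyadicCube (l k) J ⊆ dyadicCube (l (k - 1)) I :=
    nested_cube hlkpos hTpos hLT J
  -- X k ⊆ unitCube and X k ⊆ X (k-1)
  have hXunit : ∀ j, X j ⊆ unitCube d := by
    intro j
    induction j with
    | zero => rw [hX0]
    | succ j ih => exact (hXmono j).trans ih
  have hXsub : X k ⊆ X (k - 1) := by
    have h := hXmono (k - 1)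
    rwa [Nat.sub_add_cancel hk] at h
  have hJU : dyadicCube (l k) J ⊆ unitCube d := hJX.trans (hXunit k)
  obtain ⟨hrec, -⟩ := hμrec k hk J hJU I hJI
  rw [hrec hJX]
  set N : ℕ := cubeCount (l k) (X k ∩ dyadicCube (l (k - 1)) I) with hNdef
  -- N is large
  have hImem : I ∈ cubesMeeting (l (k - 1)) (X (k - 1)) := by
    obtain ⟨x0, hx0⟩ := dyadicCube_nonempty hlkpos J
    exact ⟨x0, hJI hx0, hXsub (hJX hx0)⟩
  have hN : (1 / 2 : ℝ) * (l (k - 1) / r k) ^ d ≤ (N : ℝ) := hXlarge k hk I hImem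
  have hhalf : (0 : ℝ) < (1 / 2) * (l (k - 1) / r k) ^ d := by
    have := pow_pos (div_pos hLpos hRpos) d
    linarith
  have hNpos : (0 : ℝ) < (N : ℝ) := lt_of_lt_of_le hhalf hN
  -- μ of the big cube is at most 1
  have hμI : μ (dyadicCube (l (k - 1)) I) ≤ 1 := by
    calc μ (dyadicCube (l (k - 1)) I) ≤ μ Set.univ := MeasureTheory.measure_mono (Set.subset_univ _)
      _ = μ (unitCube d ∪ (unitCube d)ᶜ) := by rw [Set.union_compl_self]
      _ ≤ μ (unitCube d) + μ (unitCube d)ᶜ := MeasureTheory.measure_union_le _ _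
      _ = 1 := by rw [hμ1, hμ2, add_zero]
  -- the real-number estimate
  set E : ℝ := ((d : ℝ) * n - α) / ((n : ℝ) - 1) -
      ((n : ℝ) + 1) * ε k / (2 * ((n : ℝ) - 1)) with hEdef
  set β : ℝ := ((d : ℝ) * n - α - ε k) / ((d : ℝ) * ((n : ℝ) - 1)) with hβdef
  have hd0 : (d : ℝ) ≠ 0 := by positivity
  have hn1 : (n : ℝ) - 1 ≠ 0 := by
    have : (2 : ℝ) ≤ (n : ℝ) := by exact_mod_cast hn
    linarith
  have hexp : β * (d : ℝ) - ε k / 2 = E := by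
    rw [hβdef, hEdef]
    field_simp
    ring
  have hRd : r k ^ d ≤ C₀ ^ d * l k ^ (β * (d : ℝ)) := by
    calc r k ^ d ≤ (C₀ * l k ^ β) ^ d := pow_le_pow_left₀ hRpos.le (hrsize k hk) d
      _ = C₀ ^ d * (l k ^ β) ^ d := mul_pow _ _ _
      _ = C₀ ^ d * l k ^ (β * (d : ℝ)) := by
          rw [← Real.rpow_natCast (l k ^ β) d, ← Real.rpow_mul hlkpos.le]
  have hLd : l k ^ (ε k / 2) ≤ l (k - 1) ^ d := by
    have hq := hlquad k hk
    have h12 : (l k ^ ε k) ^ ((1 : ℝ) / 2) ≤ (l (k - 1) ^ (2 * (d : ℝ))) ^ ((1 : ℝ) / 2) :=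
      Real.rpow_le_rpow (Real.rpow_nonneg hlkpos.le _) hq (by norm_num)
    rw [← Real.rpow_mul hlkpos.le, ← Real.rpow_mul hLpos.le] at h12
    have e1 : ε k * (1 / 2) = ε k / 2 := by ring
    have e2 : 2 * (d : ℝ) * (1 / 2) = (d : ℝ) := by ring
    rw [e1, e2] at h12
    rwa [Real.rpow_natCast] at h12
  have hinv : (l (k - 1) ^ d)⁻¹ ≤ l k ^ (-(ε k / 2)) := by
    rw [Real.rpow_neg hlkpos.le]
    exact inv_anti₀ (Real.rpow_pos_of_pos hlkpos _) hLd
  have hmain : (r k / l (k - 1)) ^ d ≤ C₀ ^ d * l k ^ E := by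
    rw [div_pow, div_eq_mul_inv]
    calc r k ^ d * (l (k - 1) ^ d)⁻¹
        ≤ (C₀ ^ d * l k ^ (β * (d : ℝ))) * l k ^ (-(ε k / 2)) := by
          apply mul_le_mul hRd hinv (inv_nonneg.2 (pow_nonneg hLpos.le d)) (by positivity)
      _ = C₀ ^ d * l k ^ (β * (d : ℝ) - ε k / 2) := by
          rw [mul_assoc, ← Real.rpow_add hlkpos]
          ring_nf
      _ = C₀ ^ d * l k ^ E := by rw [hexp]
  have heq : (((1 : ℝ) / 2) * (l (k - 1) / r k) ^ d)⁻¹ = 2 * (r k / l (k - 1)) ^ d := by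
    rw [mul_inv, ← inv_pow, inv_div]
    norm_num
  have key : 1 / (N : ℝ) ≤ 2 * C₀ ^ d * l k ^ E := by
    calc 1 / (N : ℝ) ≤ 1 / (((1 : ℝ) / 2) * (l (k - 1) / r k) ^ d) :=
          one_div_le_one_div_of_le hhalf hN
      _ = 2 * (r k / l (k - 1)) ^ d := by rw [one_div, heq]
      _ ≤ 2 * (C₀ ^ d * l k ^ E) := by linarith [hmain]
      _ = 2 * C₀ ^ d * l k ^ E := by ring
  -- finish in ENNReal
  calc μ (dyadicCube (l (k - 1)) I) / (N : ENNReal)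
      ≤ 1 / (N : ENNReal) := ENNReal.div_le_div_right hμI _
    _ = ENNReal.ofReal (1 / (N : ℝ)) := by
        rw [one_div, one_div, ENNReal.ofReal_inv_of_pos hNpos, ENNReal.ofReal_natCast]
    _ ≤ ENNReal.ofReal (2 * C₀ ^ d * l k ^ E) := ENNReal.ofReal_le_ofReal key


end
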